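/- arXiv:2403.17877 — 2 statements merged into one kernel-verified Lean document; each statement's English description precedes it below -/
import Mathlib

section
/- For every even integer n >= 4, the minimum size of an identifying code of the path P_n on n vertices equals n/2 + 1. -/
open SimpleGraph

/-- The closed neighborhood of a vertex. -/
def cnbr {V : Type*} (G : SimpleGraph V) (v : V) : Set V := insert v (G.neighborSet v)

/-- `C` is an identifying code of `G`: every vertex is dominated by `C` and the
closed-neighborhood traces on `C` are pairwise distinct. -/
def IsIdCode {V : Type*} (G : SimpleGraph V) (C : Set V) : Prop :=
  (∀ v, (cnbr G v ∩ C).Nonempty) ∧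
  ∀ u v : V, cnbr G u ∩ C = cnbr G v ∩ C → u = v

/-- The minimum size of an identifying code of `G`. -/
noncomputable def gammaID {V : Type*} (G : SimpleGraph V) : ℕ :=
  sInf {n | ∃ C : Set V, IsIdCode G C ∧ C.ncard = n}


/-- pattern conditions on a padded binary string: no 000, no two zeros at distance 3. -/
def NP (l : List Bool) : Prop :=
  (∀ i, l.getD i true = true ∨ l.getD (i+1) true = true ∨ l.getD (i+2) true = true) ∧
  (∀ i, l.getD i true = true ∨ l.getD (i+3) true = true)

lemma np_tail {a : Bool} {l : List Bool} (h : NP (a :: l)) : NP l := by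
  refine ⟨fun i => ?_, fun i => ?_⟩
  · simpa [List.getD_cons_succ] using h.1 (i+1)
  · simpa [List.getD_cons_succ] using h.2 (i+1)

lemma ite_le2 (l : List Bool) : (if l = [false, false] then 2 else 1) ≤ 2 := by
  split <;> omega

lemma ite_ge1 (l : List Bool) : 1 ≤ (if l = [false, false] then 2 else 1) := by
  split <;> omega

lemma key : ∀ (N : ℕ) (l : List Bool), l.length ≤ N → NP l →
    2 * l.count false ≤ l.length + (if l = [false, false] then 2 else 1) := by
  intro N
  induction N with
  | zero =>
    intro l hl _
    have : l = [] := List.length_eq_zero_iff.mp (Nat.le_zero.mp hl)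
    subst this; simp
  | succ N ih =>
    intro l hl h
    match l with
    | [] => simp
    | [a] => cases a <;> simp
    | true :: b :: t =>
      have h1 := ih (b :: t) (by simpa using Nat.le_of_succ_le_succ hl) (np_tail h)
      have h2 := ite_le2 (b :: t)
      have h3 := ite_ge1 (true :: b :: t)
      have e1 : (true :: b :: t).count false = (b :: t).count false := by simp
      have e2 : (true :: b :: t).length = (b :: t).length + 1 := by simp
      omega
    | false :: true :: t =>
      have e1 : (false :: true :: t).count false = t.count false + 1 := by simp
      have e2 : (false :: true :: t).length = t.length + 2 := by simp
      have e3 : (if false :: true :: t = [false, false] then 2 else 1) = 1 := by simp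
      match t with
      | [] => simp
      | true :: t1 =>
        have h1 := ih (true :: t1) (by simp at hl ⊢; omega) (np_tail (np_tail h))
        have e4 : (if true :: t1 = [false, false] then 2 else 1) = 1 := by simp
        rw [e4] at h1
        have e5 : (true :: t1).count false = t1.count false := by simp
        have e6 : (false :: true :: true :: t1).count false = t1.count false + 1 := by simp
        have e7 : (false :: true :: true :: t1).length = t1.length + 3 := by simp
        have e8 : (if false :: true :: true :: t1 = [false, false] then 2 else 1) = 1 := by simp
        rw [e5] at h1
        simp only [List.length_cons] at h1
        omega
      | [false] => simp
      | false :: false :: t2 =>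
        exfalso
        have := h.2 0
        simp [List.getD] at this
      | false :: true :: t2 =>
        have h1 := ih (false :: true :: t2) (by simp at hl ⊢; omega)
          (np_tail (np_tail h))
        have e4 : (if false :: true :: t2 = [false, false] then 2 else 1) = 1 := by simp
        rw [e4] at h1
        have e5 : (false :: true :: t2).count false = t2.count false + 1 := by simp
        have e6 : (false :: true :: false :: true :: t2).count false = t2.count false + 2 := by
          simp
        have e7 : (false :: true :: false :: true :: t2).length = t2.length + 4 := by simp
        have e8 : (if false :: true :: false :: true :: t2 = [false, false] then 2 else 1) = 1 := by
          simp
        rw [e5] at h1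
        simp only [List.length_cons] at h1
        omega
    | false :: false :: t =>
      match t with
      | [] => simp
      | false :: t1 =>
        exfalso
        have := h.1 0
        simp [List.getD] at this
      | [true] => simp
      | true :: false :: t2 =>
        exfalso
        have := h.2 0
        simp [List.getD] at this
      | [true, true] => simp
      | true :: true :: false :: t3 =>
        exfalso
        have := h.2 1
        simp [List.getD] at this
      | true :: true :: true :: t3 =>
        have h1 := ih t3 (by simp at hl ⊢; omega)
          (np_tail (np_tail (np_tail (np_tail (np_tail h)))))
        have h2 := ite_le2 t3
        have e6 : (false :: false :: true :: true :: true :: t3).count false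
            = t3.count false + 2 := by simp
        have e7 : (false :: false :: true :: true :: true :: t3).length = t3.length + 5 := by simp
        have e8 : (if false :: false :: true :: true :: true :: t3 = [false, false] then 2 else 1)
            = 1 := by simp
        omega

lemma count_ofFn_true : ∀ (n : ℕ) (f : Fin n → Bool),
    (List.ofFn f).count true = ∑ i, (if f i = true then 1 else 0) := by
  intro n
  induction n with
  | zero => intro f; simp
  | succ n ih =>
    intro f
    rw [List.ofFn_succ, Fin.sum_univ_succ, List.count_cons, ih]
    cases h : f 0 <;> simp [h] <;> omega

lemma count_true_ncard {n : ℕ} (C : Set (Fin n)) (f : Fin n → Bool)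
    (hf : ∀ i, f i = true ↔ i ∈ C) : (List.ofFn f).count true = C.ncard := by
  classical
  rw [Set.ncard_eq_toFinset_card', count_ofFn_true, ← Finset.card_filter]
  congr 1
  rw [← Set.filter_mem_univ_eq_toFinset]
  exact Finset.filter_congr fun x _ => hf x

lemma count_false_add_true (l : List Bool) : l.count false + l.count true = l.length := by
  induction l with
  | nil => simp
  | cons a t ih => cases a <;> simp [List.count_cons] <;> omega

lemma mem_cnbr_path {n : ℕ} {v w : Fin n} :
    w ∈ cnbr (pathGraph n) v ↔ w = v ∨ w.val + 1 = v.val ∨ v.val + 1 = w.val := by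
  simp only [cnbr, Set.mem_insert_iff, mem_neighborSet, pathGraph_adj]
  tauto

lemma lower_bound (n : ℕ) (heven : Even n) (hn : 4 ≤ n) (C : Set (Fin n))
    (h : IsIdCode (pathGraph n) C) : n / 2 + 1 ≤ C.ncard := by
  classical
  set f : Fin n → Bool := fun i => if i ∈ C then true else false with hfdef
  have hf : ∀ i, f i = true ↔ i ∈ C := by
    intro i; simp [hfdef]
  set l : List Bool := false :: (List.ofFn f ++ [false]) with hl
  have hlen : l.length = n + 2 := by simp [hl]
  have hgmid : ∀ i (hi : i < n), l.getD (i+1) true = f ⟨i, hi⟩ := by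
    intro i hi
    rw [hl, List.getD_cons_succ,
      List.getD_eq_getElem _ _ (by simp; omega),
      List.getElem_append_left (by simpa using hi)]
    simp
  have hgout : ∀ j, n + 2 ≤ j → l.getD j true = true := by
    intro j hj
    apply List.getD_eq_default
    omega
  have hmem : ∀ (w : Fin n), w ∈ C → l.getD (w.val + 1) true = true := by
    intro w hw
    rw [hgmid w.val w.isLt]
    simp only [Fin.eta]
    exact (hf w).mpr hw
  -- domination in index form
  have hA : ∀ i, i < n → ∃ w : Fin n, w ∈ C ∧
      (w.val + 1 = i ∨ w.val = i ∨ w.val = i + 1) := by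
    intro i hi
    obtain ⟨w, hw1, hw2⟩ := h.1 ⟨i, hi⟩
    refine ⟨w, hw2, ?_⟩
    rcases mem_cnbr_path.mp hw1 with h1 | h1 | h1
    · right; left; rw [h1]
    · left; exact h1
    · right; right; simp only [Fin.val_mk] at h1; omega
  -- pair separation in index form
  have hB : ∀ i, i + 1 < n → ∃ w : Fin n, w ∈ C ∧ (w.val + 1 = i ∨ w.val = i + 2) := by
    intro i hi
    have hne : (⟨i, by omega⟩ : Fin n) ≠ ⟨i+1, hi⟩ := by simp [Fin.ext_iff]
    have hne2 : cnbr (pathGraph n) ⟨i, by omega⟩ ∩ C ≠ cnbr (pathGraph n) ⟨i+1, hi⟩ ∩ C :=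
      fun hc => hne (h.2 _ _ hc)
    have hx : ∃ w : Fin n, ¬(w ∈ cnbr (pathGraph n) ⟨i, by omega⟩ ∩ C ↔
        w ∈ cnbr (pathGraph n) ⟨i+1, hi⟩ ∩ C) := by
      by_contra hc
      push_neg at hc
      exact hne2 (Set.ext hc)
    obtain ⟨w, hw⟩ := hx
    have hcases : (w ∈ cnbr (pathGraph n) ⟨i, by omega⟩ ∩ C ∧
        ¬ w ∈ cnbr (pathGraph n) ⟨i+1, hi⟩ ∩ C) ∨
        (w ∈ cnbr (pathGraph n) ⟨i+1, hi⟩ ∩ C ∧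
        ¬ w ∈ cnbr (pathGraph n) ⟨i, by omega⟩ ∩ C) := by tauto
    rcases hcases with ⟨⟨hwc, hwC⟩, hnot⟩ | ⟨⟨hwc, hwC⟩, hnot⟩
    · refine ⟨w, hwC, ?_⟩
      have h1 := mem_cnbr_path.mp hwc
      have h2 : ¬ (w ∈ cnbr (pathGraph n) ⟨i+1, hi⟩) := fun hm => hnot ⟨hm, hwC⟩
      rw [mem_cnbr_path] at h2
      simp only [Fin.ext_iff, Fin.val_mk] at h1 h2
      push_neg at h2
      omega
    · refine ⟨w, hwC, ?_⟩
      have h1 := mem_cnbr_path.mp hwc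
      have h2 : ¬ (w ∈ cnbr (pathGraph n) ⟨i, by omega⟩) := fun hm => hnot ⟨hm, hwC⟩
      rw [mem_cnbr_path] at h2
      simp only [Fin.ext_iff, Fin.val_mk] at h1 h2
      push_neg at h2
      omega
  have np1 : ∀ j, l.getD j true = true ∨ l.getD (j+1) true = true ∨ l.getD (j+2) true = true := by
    intro j
    by_cases hj : n ≤ j
    · right; right; exact hgout (j+2) (by omega)
    · obtain ⟨w, hwC, hw⟩ := hA j (by omega)
      rcases hw with h1 | h1 | h1
      · left; rw [← h1]; exact hmem w hwC
      · right; left; rw [← h1]; exact hmem w hwC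
      · right; right
        have : j + 2 = w.val + 1 := by omega
        rw [this]; exact hmem w hwC
  have np2 : ∀ j, l.getD j true = true ∨ l.getD (j+3) true = true := by
    intro j
    by_cases hj : j + 1 < n
    · obtain ⟨w, hwC, hw⟩ := hB j hj
      rcases hw with h1 | h1
      · left; rw [← h1]; exact hmem w hwC
      · right
        have : j + 3 = w.val + 1 := by omega
        rw [this]; exact hmem w hwC
    · right; exact hgout (j+3) (by omega)
  have hkey := key l.length l le_rfl ⟨np1, np2⟩
  have hne2 : l ≠ [false, false] := by
    intro hcontra
    have := congrArg List.length hcontra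
    rw [hlen] at this
    simp at this
    omega
  rw [if_neg hne2] at hkey
  have hcount : l.count false = (List.ofFn f).count false + 2 := by
    simp [hl, List.count_cons, List.count_append]
  have hsum : (List.ofFn f).count false + (List.ofFn f).count true = n := by
    rw [count_false_add_true]; simp
  have htrue : (List.ofFn f).count true = C.ncard := count_true_ncard C f hf
  obtain ⟨m, hm⟩ := heven
  omega

lemma code_isIdCode (n : ℕ) (heven : Even n) (hn : 4 ≤ n) :
    IsIdCode (pathGraph n) {i : Fin n | i.val % 2 = 0 ∨ i.val = n - 3} := by
  obtain ⟨m, hm⟩ := heven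
  set C : Set (Fin n) := {i | i.val % 2 = 0 ∨ i.val = n - 3} with hCdef
  have hmemC : ∀ w : Fin n, w ∈ C ↔ (w.val % 2 = 0 ∨ w.val = n - 3) := fun w => Iff.rfl
  have hdom : ∀ v : Fin n, (cnbr (pathGraph n) v ∩ C).Nonempty := by
    intro v
    by_cases hv : v.val % 2 = 0
    · exact ⟨v, mem_cnbr_path.mpr (Or.inl rfl), Or.inl hv⟩
    · refine ⟨⟨v.val - 1, by omega⟩, mem_cnbr_path.mpr ?_, ?_⟩
      · right; left; simp only [Fin.val_mk]; omega
      · left; simp only [Fin.val_mk]; omega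
  refine ⟨hdom, ?_⟩
  intro u v hEq
  wlog hab : u.val ≤ v.val generalizing u v
  · exact (this v u hEq.symm (by omega)).symm
  have trans1 : ∀ w : Fin n, w ∈ cnbr (pathGraph n) u → w ∈ C →
      w ∈ cnbr (pathGraph n) v := by
    intro w h1 h2
    have hw : w ∈ cnbr (pathGraph n) u ∩ C := ⟨h1, h2⟩
    rw [hEq] at hw; exact hw.1
  have trans2 : ∀ w : Fin n, w ∈ cnbr (pathGraph n) v → w ∈ C →
      w ∈ cnbr (pathGraph n) u := by
    intro w h1 h2
    have hw : w ∈ cnbr (pathGraph n) v ∩ C := ⟨h1, h2⟩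
    rw [← hEq] at hw; exact hw.1
  have hvn : v.val < n := v.isLt
  have hun : u.val < n := u.isLt
  obtain ⟨w0, hw0c, hw0C⟩ := hdom u
  have hw0v := trans1 w0 hw0c hw0C
  have e1 := mem_cnbr_path.mp hw0c
  have e2 := mem_cnbr_path.mp hw0v
  simp only [Fin.ext_iff] at e1 e2
  rcases (show v.val = u.val ∨ v.val = u.val + 1 ∨ v.val = u.val + 2 by omega)
    with hb | hb | hb
  · exact Fin.ext hb.symm
  · exfalso
    by_cases ha : u.val % 2 = 0
    · by_cases h2n : u.val + 2 < n
      · have hwC : (⟨u.val + 2, h2n⟩ : Fin n) ∈ C := Or.inl (by simp only [Fin.val_mk]; omega)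
        have hwv : (⟨u.val + 2, h2n⟩ : Fin n) ∈ cnbr (pathGraph n) v :=
          mem_cnbr_path.mpr (by right; right; simp only [Fin.val_mk]; omega)
        have hwu := mem_cnbr_path.mp (trans2 _ hwv hwC)
        simp only [Fin.ext_iff, Fin.val_mk] at hwu
        omega
      · have hwC : (⟨n - 3, by omega⟩ : Fin n) ∈ C := Or.inr (by simp only [Fin.val_mk])
        have hwu : (⟨n - 3, by omega⟩ : Fin n) ∈ cnbr (pathGraph n) u :=
          mem_cnbr_path.mpr (by right; left; simp only [Fin.val_mk]; omega)
        have hwv := mem_cnbr_path.mp (trans1 _ hwu hwC)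
        simp only [Fin.ext_iff, Fin.val_mk] at hwv
        omega
    · have hwC : (⟨u.val - 1, by omega⟩ : Fin n) ∈ C := Or.inl (by simp only [Fin.val_mk]; omega)
      have hwu : (⟨u.val - 1, by omega⟩ : Fin n) ∈ cnbr (pathGraph n) u :=
        mem_cnbr_path.mpr (by right; left; simp only [Fin.val_mk]; omega)
      have hwv := mem_cnbr_path.mp (trans1 _ hwu hwC)
      simp only [Fin.ext_iff, Fin.val_mk] at hwv
      omega
  · exfalso
    have huC : u ∉ C := by
      intro huC
      have h1 := mem_cnbr_path.mp (trans1 u (mem_cnbr_path.mpr (Or.inl rfl)) huC)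
      simp only [Fin.ext_iff] at h1
      omega
    rw [hmemC] at huC
    push_neg at huC
    have hwC : (⟨u.val - 1, by omega⟩ : Fin n) ∈ C := Or.inl (by simp only [Fin.val_mk]; omega)
    have hwu : (⟨u.val - 1, by omega⟩ : Fin n) ∈ cnbr (pathGraph n) u :=
      mem_cnbr_path.mpr (by right; left; simp only [Fin.val_mk]; omega)
    have hwv := mem_cnbr_path.mp (trans1 _ hwu hwC)
    simp only [Fin.ext_iff, Fin.val_mk] at hwv
    omega

lemma code_ncard (n : ℕ) (heven : Even n) (hn : 4 ≤ n) :
    ({i : Fin n | i.val % 2 = 0 ∨ i.val = n - 3} : Set (Fin n)).ncard = n / 2 + 1 := by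
  classical
  obtain ⟨m, hm⟩ := heven
  have hset : ({i : Fin n | i.val % 2 = 0 ∨ i.val = n - 3} : Set (Fin n)) =
      ↑(Finset.univ.filter (fun i : Fin n => i.val % 2 = 0 ∨ i.val = n - 3)) := by
    ext i; simp
  rw [hset, Set.ncard_coe_finset, Finset.filter_or, Finset.card_union_of_disjoint]
  · have h1 : (Finset.univ.filter (fun i : Fin n => i.val % 2 = 0)).card = m := by
      rw [← Finset.card_fin m]
      apply Finset.card_bij (fun (i : Fin n) _ => (⟨i.val / 2, by omega⟩ : Fin m))
      · intro a ha; exact Finset.mem_univ _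
      · intro a1 ha1 a2 ha2 hf
        simp only [Finset.mem_filter] at ha1 ha2
        simp only [Fin.ext_iff, Fin.val_mk] at hf ⊢
        omega
      · intro b _
        refine ⟨⟨2 * b.val, by omega⟩, ?_, ?_⟩
        · simp only [Finset.mem_filter, Fin.val_mk]
          exact ⟨Finset.mem_univ _, by omega⟩
        · simp only [Fin.ext_iff, Fin.val_mk]
          omega
    have h2 : (Finset.univ.filter (fun i : Fin n => i.val = n - 3)).card = 1 := by
      rw [Finset.card_eq_one]
      refine ⟨⟨n - 3, by omega⟩, ?_⟩
      ext i
      simp only [Finset.mem_filter, Finset.mem_singleton, Fin.ext_iff, Fin.val_mk]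
      constructor
      · rintro ⟨-, h⟩; exact h
      · intro h; exact ⟨Finset.mem_univ _, h⟩
    rw [h1, h2]
    omega
  · rw [Finset.disjoint_left]
    intro i h1 h2
    simp only [Finset.mem_filter] at h1 h2
    omega

theorem stmt_7 (n : ℕ) (heven : Even n) (hn : 4 ≤ n) :
    gammaID (SimpleGraph.pathGraph n) = n / 2 + 1 := by
  have hid := code_isIdCode n heven hn
  have hcard := code_ncard n heven hn
  have hmem : n / 2 + 1 ∈ {k | ∃ C : Set (Fin n), IsIdCode (pathGraph n) C ∧ C.ncard = k} :=
    ⟨_, hid, hcard⟩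
  unfold gammaID
  refine le_antisymm (Nat.sInf_le hmem) (le_csInf ⟨_, hmem⟩ ?_)
  rintro k ⟨C, hC, rfl⟩
  exact lower_bound n heven hn C hC
end

section
/- Let n >= 6 be even and let G be obtained from the cycle C_n with vertices v_1, ..., v_n (in cyclic order) by adding a chord between two non-consecutive vertices. If the chord joins two vertices of even index, then the set of vertices of odd index is an identifying code of G of size n/2; symmetrically if the chord joins two odd-index vertices, the even-index vertices form an identifying code; and if the chord joins an even-index and an odd-index vertex, both the even-index set and the odd-index set are identifying codes of G. -/
open SimpleGraph

lemma my_edge_comm {V : Type*} (s t : V) : SimpleGraph.edge s t = SimpleGraph.edge t s := by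
  unfold SimpleGraph.edge; rw [Sym2.eq_swap]

lemma card_even_range (n : ℕ) :
    ((Finset.range n).filter (fun x => x % 2 = 0)).card = (n + 1) / 2 := by
  induction n with
  | zero => simp
  | succ n ih =>
    rw [Finset.range_add_one, Finset.filter_insert]
    by_cases h : n % 2 = 0
    · rw [if_pos h, Finset.card_insert_of_notMem (by simp), ih]; omega
    · rw [if_neg h, ih]; omega

lemma card_odd_range (n : ℕ) :
    ((Finset.range n).filter (fun x => x % 2 = 1)).card = n / 2 := by
  induction n with
  | zero => simp
  | succ n ih =>
    rw [Finset.range_add_one, Finset.filter_insert]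
    by_cases h : n % 2 = 1
    · rw [if_pos h, Finset.card_insert_of_notMem (by simp), ih]; omega
    · rw [if_neg h, ih]; omega

lemma card_parity (n : ℕ) [NeZero n] (c : ℕ) :
    {v : Fin n | v.val % 2 = c}.ncard =
      ((Finset.range n).filter (fun x => x % 2 = c)).card := by
  classical
  rw [Set.ncard_eq_toFinset_card', Set.toFinset_setOf, Finset.card_filter,
    Fin.sum_univ_eq_sum_range (fun x => if x % 2 = c then (1:ℕ) else 0), ← Finset.card_filter]

open Fin.NatCast Fin.CommRing in
lemma key_s16 (n : ℕ) (hn : 6 ≤ n) (heven : Even n) (i j : Fin n) (hij : i ≠ j)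
    (c : ℕ) (hc : c < 2) (hj : j.val % 2 ≠ c) :
    IsIdCode (SimpleGraph.cycleGraph n ⊔ SimpleGraph.edge i j) {v | v.val % 2 = c} := by
  haveI : NeZero n := ⟨by omega⟩
  set G := SimpleGraph.cycleGraph n ⊔ SimpleGraph.edge i j with hG
  set C : Set (Fin n) := {v | v.val % 2 = c} with hC
  have hone : (1 : Fin n).val = 1 := by rw [Fin.val_one', Nat.mod_eq_of_lt (by omega)]
  -- small numerals nonzero
  have hcast : ∀ k : ℕ, 0 < k → k < n → ((k : ℕ) : Fin n) ≠ 0 := by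
    intro k hk1 hk2 h
    rw [Fin.natCast_eq_zero] at h
    exact absurd (Nat.le_of_dvd hk1 h) (by omega)
  have h2 : ((2 : ℕ) : Fin n) ≠ 0 := hcast 2 (by omega) (by omega)
  have h4 : ((4 : ℕ) : Fin n) ≠ 0 := hcast 4 (by omega) (by omega)
  -- adjacency characterization
  have hadj : ∀ v x : Fin n, G.Adj v x ↔
      (x = v - 1 ∨ x = v + 1 ∨ (v = i ∧ x = j) ∨ (v = j ∧ x = i)) := by
    intro v x
    rw [hG, sup_adj, cycleGraph_adj', edge_adj]
    constructor
    · rintro (⟨h | h⟩ | ⟨h, -⟩)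
      · left
        have : v - x = 1 := by ext; rw [h, hone]
        have := sub_sub_cancel v x ▸ congrArg (v - ·) this
        exact this
      · right; left
        have h1 : x - v = 1 := by ext; rw [h, hone]
        have := sub_eq_iff_eq_add.mp h1
        rw [this, add_comm]
      · tauto
    · rintro (rfl | rfl | ⟨rfl, rfl⟩ | ⟨rfl, rfl⟩)
      · left; left; rw [sub_sub_cancel, hone]
      · left; right; rw [add_sub_cancel_left, hone]
      · right; exact ⟨Or.inl ⟨rfl, rfl⟩, hij⟩
      · right; exact ⟨Or.inr ⟨rfl, rfl⟩, hij.symm⟩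
  have hcn : ∀ v x : Fin n, x ∈ cnbr G v ↔
      (x = v ∨ x = v - 1 ∨ x = v + 1 ∨ (v = i ∧ x = j) ∨ (v = j ∧ x = i)) := by
    intro v x
    simp only [cnbr, Set.mem_insert_iff, mem_neighborSet, hadj]
  -- parity
  have hpadd : ∀ v : Fin n, ((v + 1).val) % 2 = (v.val + 1) % 2 := by
    intro v
    rw [Fin.val_add, Nat.mod_mod_of_dvd _ heven.two_dvd, hone]
  have hpsub : ∀ v : Fin n, ((v - 1).val) % 2 = (v.val + 1) % 2 := by
    intro v
    have := hpadd (v - 1)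
    rw [sub_add_cancel] at this
    omega
  -- arithmetic contradictions
  have hc2 : ∀ v : Fin n, v - 1 = v + 1 → False := by
    intro v h
    apply h2
    push_cast
    linear_combination -h
  have hc4 : ∀ u v : Fin n, v - 1 = u + 1 → v + 1 = u - 1 → False := by
    intro u v e1 e2
    apply h4
    push_cast
    linear_combination e2 - e1
  -- basic membership
  have hself : ∀ v : Fin n, v ∈ cnbr G v := fun v => (hcn v v).2 (Or.inl rfl)
  have hsub : ∀ v : Fin n, v - 1 ∈ cnbr G v := fun v => (hcn v _).2 (Or.inr (Or.inl rfl))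
  have hadd : ∀ v : Fin n, v + 1 ∈ cnbr G v := fun v => (hcn v _).2 (Or.inr (Or.inr (Or.inl rfl)))
  have hmemC : ∀ v : Fin n, v ∈ C ↔ v.val % 2 = c := fun v => Iff.rfl
  constructor
  · -- domination
    intro v
    by_cases hv : v.val % 2 = c
    · exact ⟨v, hself v, hv⟩
    · refine ⟨v + 1, hadd v, ?_⟩
      have := hpadd v
      have hv2 := Nat.mod_two_eq_zero_or_one v.val
      simp only [hmemC]
      omega
  · -- separation
    have hin : ∀ w : Fin n, w.val % 2 = c → ∀ x ∈ cnbr G w ∩ C, x = w := by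
      rintro w hw x ⟨hx1, hx2⟩
      simp only [hmemC] at hx2
      rcases (hcn w x).1 hx1 with rfl | rfl | rfl | ⟨rfl, rfl⟩ | ⟨rfl, rfl⟩
      · rfl
      · have := hpsub w; omega
      · have := hpadd w; omega
      · exact absurd hx2 hj
      · exact absurd hw hj
    have hout : ∀ w : Fin n, w.val % 2 ≠ c → w ≠ j →
        ∀ x ∈ cnbr G w ∩ C, x = w - 1 ∨ x = w + 1 := by
      rintro w hw hwj x ⟨hx1, hx2⟩
      simp only [hmemC] at hx2
      rcases (hcn w x).1 hx1 with rfl | rfl | rfl | ⟨rfl, rfl⟩ | ⟨rfl, rfl⟩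
      · exact absurd hx2 hw
      · exact Or.inl rfl
      · exact Or.inr rfl
      · exact absurd hx2 hj
      · exact absurd rfl hwj
    have hoppmem : ∀ w : Fin n, w.val % 2 ≠ c → (w - 1 ∈ C ∧ w + 1 ∈ C) := by
      intro w hw
      have h1 := hpsub w
      have h2 := hpadd w
      have hv2 := Nat.mod_two_eq_zero_or_one w.val
      simp only [hmemC]
      omega
    -- core for both-outside case
    have core : ∀ a b : Fin n, a.val % 2 ≠ c → b.val % 2 ≠ c → a ≠ j → a ≠ b →
        cnbr G a ∩ C = cnbr G b ∩ C → False := by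
      intro a b ha hb haj hab h
      obtain ⟨hb1, hb2⟩ := hoppmem b hb
      have m1 : b - 1 ∈ cnbr G a ∩ C := h ▸ ⟨hsub b, hb1⟩
      have m2 : b + 1 ∈ cnbr G a ∩ C := h ▸ ⟨hadd b, hb2⟩
      rcases hout a ha haj _ m1 with e1 | e1
      · exact hab (sub_left_inj.mp e1).symm
      · rcases hout a ha haj _ m2 with e2 | e2
        · exact hc4 a b e1 e2
        · exact hc2 b (by rw [e1, e2])
    intro u v h
    by_contra hne
    by_cases hu : u.val % 2 = c <;> by_cases hv : v.val % 2 = c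
    · exact hne (hin v hv u (h ▸ ⟨hself u, hu⟩))
    · obtain ⟨hv1, hv2⟩ := hoppmem v hv
      have m1 : v - 1 ∈ cnbr G u ∩ C := h ▸ ⟨hsub v, hv1⟩
      have m2 : v + 1 ∈ cnbr G u ∩ C := h ▸ ⟨hadd v, hv2⟩
      exact hc2 v (by rw [hin u hu _ m1, hin u hu _ m2])
    · obtain ⟨hu1, hu2⟩ := hoppmem u hu
      have m1 : u - 1 ∈ cnbr G v ∩ C := h ▸ ⟨hsub u, hu1⟩
      have m2 : u + 1 ∈ cnbr G v ∩ C := h ▸ ⟨hadd u, hu2⟩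
      exact hc2 u (by rw [hin v hv _ m1, hin v hv _ m2])
    · by_cases huj : u = j
      · exact core v u hv hu (fun hvj => hne (hvj ▸ huj)) (Ne.symm hne) h.symm
      · exact core u v hu hv huj hne h


/-- Vertex `i : Fin n` stands for `v_{i+1}`, so `v_k` has odd index iff `i.val % 2 = 0`. -/
theorem stmt_16 (n : ℕ) (hn : 6 ≤ n) (heven : Even n) (i j : Fin n)
    (hij : i ≠ j) (hnadj : ¬ (SimpleGraph.cycleGraph n).Adj i j) :
    let G := SimpleGraph.cycleGraph n ⊔ SimpleGraph.edge i j
    let Vodd : Set (Fin n) := {v | v.val % 2 = 0}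
    let Veven : Set (Fin n) := {v | v.val % 2 = 1}
    Vodd.ncard = n / 2 ∧ Veven.ncard = n / 2 ∧
    ((i.val % 2 = 1 ∧ j.val % 2 = 1) → IsIdCode G Vodd) ∧
    ((i.val % 2 = 0 ∧ j.val % 2 = 0) → IsIdCode G Veven) ∧
    (i.val % 2 ≠ j.val % 2 → IsIdCode G Vodd ∧ IsIdCode G Veven) := by
  haveI : NeZero n := ⟨by omega⟩
  intro G Vodd Veven
  have hk : 2 ∣ n := heven.two_dvd
  have hGcomm : G = SimpleGraph.cycleGraph n ⊔ SimpleGraph.edge j i := by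
    show SimpleGraph.cycleGraph n ⊔ SimpleGraph.edge i j = _
    rw [my_edge_comm]
  refine ⟨?_, ?_, ?_, ?_, ?_⟩
  · rw [show Vodd = {v : Fin n | v.val % 2 = 0} from rfl, card_parity, card_even_range]; omega
  · rw [show Veven = {v : Fin n | v.val % 2 = 1} from rfl, card_parity, card_odd_range]
  · intro ⟨_, hj2⟩
    exact key_s16 n hn heven i j hij 0 (by omega) (by omega)
  · intro ⟨_, hj2⟩
    exact key_s16 n hn heven i j hij 1 (by omega) (by omega)
  · intro hne
    have hi2 := Nat.mod_two_eq_zero_or_one i.val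
    have hj2 := Nat.mod_two_eq_zero_or_one j.val
    constructor
    · -- code of even vals: exclude the odd-val endpoint
      rcases hi2 with h | h
      · exact key_s16 n hn heven i j hij 0 (by omega) (by omega)
      · rw [hGcomm]
        exact key_s16 n hn heven j i hij.symm 0 (by omega) (by omega)
    · rcases hi2 with h | h
      · rw [hGcomm]
        exact key_s16 n hn heven j i hij.symm 1 (by omega) (by omega)
      · exact key_s16 n hn heven i j hij 1 (by omega) (by omega)
end
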